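/- In the symplectic group G = Sp_{2n}(F) over a field F, the set {g ∈ G : α_k(g) ≠ 0 for all 1 ≤ k ≤ n} equals the Bruhat cell B w_0 N, where B is the standard Borel subgroup, N its unipotent radical, w_0 the longest Weyl element, and α_k(g) is the determinant of the k×k lower-left minor with rows 2n+1-k,...,2n and columns 1,...,k. -/

import Mathlib

open Matrix Finset

/-- The `k × k` lower-left minor `α_k(g)` of a `2n × 2n` matrix. -/
def alphaMinor {F : Type*} [CommRing F] (n k : ℕ) (hk : k ≤ 2 * n)
    (g : Matrix (Fin (2 * n)) (Fin (2 * n)) F) : F :=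
  Matrix.det (Matrix.of fun s t : Fin k =>
    g ⟨2 * n - k + s.val, by have := s.isLt; omega⟩ ⟨t.val, by have := t.isLt; omega⟩)

/-- The antidiagonal symplectic form defining `Sp_{2n}`. -/
def Jsp {F : Type*} [CommRing F] (n : ℕ) : Matrix (Fin (2 * n)) (Fin (2 * n)) F :=
  Matrix.of fun i j =>
    if i.val + j.val = 2 * n - 1 then (if i.val < n then 1 else -1) else 0

namespace Stmt11

variable {F : Type*} [Field F]

/-- upper triangular -/
def upT {m : ℕ} (A : Matrix (Fin m) (Fin m) F) : Prop := ∀ i j, j < i → A i j = 0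
/-- lower triangular -/
def lowT {m : ℕ} (A : Matrix (Fin m) (Fin m) F) : Prop := ∀ i j, i < j → A i j = 0

lemma upT.bt {m : ℕ} {A : Matrix (Fin m) (Fin m) F} (h : upT A) :
    A.BlockTriangular id := fun i j hij => h i j hij

lemma lowT.bt {m : ℕ} {A : Matrix (Fin m) (Fin m) F} (h : lowT A) :
    A.BlockTriangular OrderDual.toDual := fun i j hij => h i j hij

lemma upT.det_eq {m : ℕ} {A : Matrix (Fin m) (Fin m) F} (h : upT A) :
    A.det = ∏ i, A i i := det_of_upperTriangular h.bt

lemma lowT.det_eq {m : ℕ} {A : Matrix (Fin m) (Fin m) F} (h : lowT A) :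
    A.det = ∏ i, A i i := det_of_lowerTriangular A h.bt

lemma upT.transpose {m : ℕ} {A : Matrix (Fin m) (Fin m) F} (h : upT A) : lowT Aᵀ :=
  fun i j hij => h j i hij

lemma lowT.transpose {m : ℕ} {A : Matrix (Fin m) (Fin m) F} (h : lowT A) : upT Aᵀ :=
  fun i j hij => h j i hij

lemma upT.mul {m : ℕ} {A B : Matrix (Fin m) (Fin m) F} (hA : upT A) (hB : upT B) :
    upT (A * B) := fun i j hij => (hA.bt.mul hB.bt) hij

lemma lowT.mul {m : ℕ} {A B : Matrix (Fin m) (Fin m) F} (hA : lowT A) (hB : lowT B) :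
    lowT (A * B) := fun i j hij => (hA.bt.mul hB.bt) hij

lemma upT.diag_mul {m : ℕ} {A B : Matrix (Fin m) (Fin m) F} (hA : upT A) (hB : upT B)
    (i : Fin m) : (A * B) i i = A i i * B i i := by
  rw [Matrix.mul_apply]
  refine Finset.sum_eq_single i (fun k _ hk => ?_) (by simp)
  rcases lt_or_gt_of_ne hk with h | h
  · rw [hA i k h, zero_mul]
  · rw [hB k i h, mul_zero]

lemma upT.inv {m : ℕ} {A : Matrix (Fin m) (Fin m) F} (h : upT A) (hd : A.det ≠ 0) :
    upT A⁻¹ := by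
  haveI := A.invertibleOfIsUnitDet hd.isUnit
  exact fun i j hij => blockTriangular_inv_of_blockTriangular h.bt hij

lemma lowT.inv {m : ℕ} {A : Matrix (Fin m) (Fin m) F} (h : lowT A) (hd : A.det ≠ 0) :
    lowT A⁻¹ := by
  haveI := A.invertibleOfIsUnitDet hd.isUnit
  exact fun i j hij => blockTriangular_inv_of_blockTriangular h.bt hij

lemma upT.diag_inv {m : ℕ} {A : Matrix (Fin m) (Fin m) F} (h : upT A) (hd : A.det ≠ 0)
    (i : Fin m) : A⁻¹ i i = (A i i)⁻¹ := by
  have h1 := h.diag_mul (h.inv hd) i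
  rw [mul_nonsing_inv A hd.isUnit, Matrix.one_apply_eq] at h1
  exact eq_inv_of_mul_eq_one_right h1.symm

lemma lowT.diag_mul {m : ℕ} {A B : Matrix (Fin m) (Fin m) F} (hA : lowT A) (hB : lowT B)
    (i : Fin m) : (A * B) i i = A i i * B i i := by
  rw [Matrix.mul_apply]
  refine Finset.sum_eq_single i (fun k _ hk => ?_) (by simp)
  rcases lt_or_gt_of_ne hk with h | h
  · rw [hB k i h, mul_zero]
  · rw [hA i k h, zero_mul]

lemma lowT.diag_inv {m : ℕ} {A : Matrix (Fin m) (Fin m) F} (h : lowT A) (hd : A.det ≠ 0)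
    (i : Fin m) : A⁻¹ i i = (A i i)⁻¹ := by
  have h1 := h.diag_mul (h.inv hd) i
  rw [mul_nonsing_inv A hd.isUnit, Matrix.one_apply_eq] at h1
  exact eq_inv_of_mul_eq_one_right h1.symm

/-- A matrix that is lower triangular and upper unitriangular is the identity. -/
lemma eq_one_of_lowT_upT {m : ℕ} {A : Matrix (Fin m) (Fin m) F} (hl : lowT A) (hu : upT A)
    (hd : ∀ i, A i i = 1) : A = 1 := by
  ext i j
  rcases lt_trichotomy i j with h | rfl | h
  · rw [hl i j h, Matrix.one_apply_ne h.ne]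
  · rw [hd i, Matrix.one_apply_eq]
  · rw [hu i j h, Matrix.one_apply_ne h.ne']


/-- leading principal `k × k` minor -/
def lead {m : ℕ} (k : ℕ) (hk : k ≤ m) (A : Matrix (Fin m) (Fin m) F) : F :=
  Matrix.det (Matrix.of fun s t : Fin k => A (Fin.castLE hk s) (Fin.castLE hk t))

lemma lead_zero {m : ℕ} (hk : 0 ≤ m) (A : Matrix (Fin m) (Fin m) F) : lead 0 hk A = 1 :=
  Matrix.det_fin_zero

lemma lead_one {m : ℕ} (hk : 1 ≤ m) (A : Matrix (Fin m) (Fin m) F) :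
    lead 1 hk A = A ⟨0, hk⟩ ⟨0, hk⟩ := by
  rw [lead, Matrix.det_fin_one]
  rfl

lemma lead_self {m : ℕ} (A : Matrix (Fin m) (Fin m) F) : lead m le_rfl A = A.det := rfl

/-- Schur complement w.r.t. the `(0,0)` entry. -/
def schur {m : ℕ} (A : Matrix (Fin (m + 1)) (Fin (m + 1)) F) : Matrix (Fin m) (Fin m) F :=
  Matrix.of fun i j => A i.succ j.succ - A i.succ 0 * (A 0 0)⁻¹ * A 0 j.succ

lemma castLE_succ {m k : ℕ} (hk : k ≤ m) (i : Fin k) :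
    Fin.castLE (Nat.succ_le_succ hk) i.succ = (Fin.castLE hk i).succ := rfl

lemma lead_succ_schur {m k : ℕ} (hk : k ≤ m) (A : Matrix (Fin (m + 1)) (Fin (m + 1)) F)
    (ha : A 0 0 ≠ 0) :
    lead (k + 1) (Nat.succ_le_succ hk) A = A 0 0 * lead k hk (schur A) := by
  set a := A 0 0 with haa
  set B : Matrix (Fin (k + 1)) (Fin (k + 1)) F :=
    Matrix.of fun s t => A (Fin.castLE (Nat.succ_le_succ hk) s)
      (Fin.castLE (Nat.succ_le_succ hk) t) with hB
  have hB00 : B 0 0 = a := rfl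
  set X : Matrix (Fin (k + 1)) (Fin (k + 1)) F :=
    Matrix.of fun i j => if j = 0 then B i 0 * a⁻¹ else if i = j then 1 else 0 with hX
  set Y : Matrix (Fin (k + 1)) (Fin (k + 1)) F :=
    Matrix.of fun i j =>
      if i = 0 then B 0 j else if j = 0 then 0 else B i j - B i 0 * a⁻¹ * B 0 j with hY
  have hBXY : B = X * Y := by
    ext i j
    rw [Matrix.mul_apply, Fin.sum_univ_succ]
    rcases Fin.eq_zero_or_eq_succ i with rfl | ⟨i', rfl⟩
    · have : ∀ k' : Fin k, X 0 k'.succ * Y k'.succ j = 0 := by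
        intro k'
        simp [hX, (Fin.succ_ne_zero k').symm, Fin.succ_ne_zero k']
      rw [Finset.sum_congr rfl fun k' _ => this k', Finset.sum_const_zero, add_zero]
      have hx : X 0 0 = a * a⁻¹ := by simp [hX, hB00]
      have hy : Y 0 j = B 0 j := by simp [hY]
      rw [hx, hy, mul_inv_cancel₀ ha, one_mul]
    · have hx0 : X i'.succ 0 = B i'.succ 0 * a⁻¹ := by simp [hX]
      have hsum : ∀ k' : Fin k, X i'.succ k'.succ * Y k'.succ j =
          (if i' = k' then 1 else 0) * Y k'.succ j := by
        intro k'
        simp only [hX, Matrix.of_apply, if_neg (Fin.succ_ne_zero k'), Fin.succ_inj]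
      rw [Finset.sum_congr rfl fun k' _ => hsum k', hx0]
      rcases Fin.eq_zero_or_eq_succ j with rfl | ⟨j', rfl⟩
      · have : ∀ k' : Fin k, (if i' = k' then (1:F) else 0) * Y k'.succ 0 = 0 := by
          intro k'
          simp [hY, Fin.succ_ne_zero k']
        rw [Finset.sum_congr rfl fun k' _ => this k', Finset.sum_const_zero, add_zero]
        have : Y 0 0 = a := by simp [hY, hB00]
        rw [this]
        field_simp
      · have hyj : Y 0 j'.succ = B 0 j'.succ := by simp [hY]
        simp only [ite_mul, one_mul, zero_mul]
        rw [hyj, Finset.sum_ite_eq univ i' (fun k' => Y k'.succ j'.succ), if_pos (mem_univ i')]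
        have : Y i'.succ j'.succ = B i'.succ j'.succ - B i'.succ 0 * a⁻¹ * B 0 j'.succ := by
          simp [hY, Fin.succ_ne_zero]
        rw [this]
        ring
  have hdetX : X.det = 1 := by
    have hlow : lowT X := by
      intro i j hij
      have hj0 : j ≠ 0 := Fin.pos_iff_ne_zero.mp (lt_of_le_of_lt (Fin.zero_le i) hij)
      simp [hX, hj0, hij.ne]
    rw [hlow.det_eq]
    apply Finset.prod_eq_one
    intro i _
    rcases eq_or_ne i 0 with rfl | hi
    · simp [hX, hB00, mul_inv_cancel₀ ha]
    · simp [hX, hi]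
  have hdetY : Y.det = a * lead k hk (schur A) := by
    rw [Matrix.det_succ_column_zero]
    rw [Finset.sum_eq_single 0]
    · have hy00 : Y 0 0 = a := by simp [hY, hB00]
      have hsub : (Y.submatrix (Fin.succAbove 0) Fin.succ) =
          Matrix.of fun s t : Fin k => schur A (Fin.castLE hk s) (Fin.castLE hk t) := by
        ext s t
        simp only [Matrix.submatrix_apply, Fin.succAbove_zero, hY, Matrix.of_apply,
          if_neg (Fin.succ_ne_zero s), if_neg (Fin.succ_ne_zero t), schur, hB]
        rfl
      rw [hy00, hsub]
      simp [lead]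
    · intro i _ hi
      obtain ⟨i', rfl⟩ := Fin.eq_succ_of_ne_zero hi
      have : Y i'.succ 0 = 0 := by simp [hY, Fin.succ_ne_zero]
      rw [this, mul_zero, zero_mul]
    · simp
  have : lead (k + 1) (Nat.succ_le_succ hk) A = B.det := rfl
  rw [this, hBXY, Matrix.det_mul, hdetX, hdetY, one_mul]

/-- glue a matrix from a corner entry, first row/column, and a block -/
def ext1 {m : ℕ} (a : F) (r c : Fin m → F) (D : Matrix (Fin m) (Fin m) F) :
    Matrix (Fin (m + 1)) (Fin (m + 1)) F :=
  Matrix.of fun i => Fin.cases (Fin.cons a r) (fun i' => Fin.cons (c i') (D i')) i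

@[simp] lemma ext1_zero_zero {m : ℕ} (a : F) (r c : Fin m → F) (D) :
    ext1 a r c D 0 0 = a := rfl
@[simp] lemma ext1_zero_succ {m : ℕ} (a : F) (r c : Fin m → F) (D) (j : Fin m) :
    ext1 a r c D 0 j.succ = r j := rfl
@[simp] lemma ext1_succ_zero {m : ℕ} (a : F) (r c : Fin m → F) (D) (i : Fin m) :
    ext1 a r c D i.succ 0 = c i := rfl
@[simp] lemma ext1_succ_succ {m : ℕ} (a : F) (r c : Fin m → F) (D) (i j : Fin m) :
    ext1 a r c D i.succ j.succ = D i j := rfl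

theorem lu_exists : ∀ (m : ℕ) (A : Matrix (Fin m) (Fin m) F),
    (∀ k (hk : k ≤ m), lead k hk A ≠ 0) →
    ∃ L U : Matrix (Fin m) (Fin m) F,
      lowT L ∧ upT U ∧ (∀ i, L i i ≠ 0) ∧ (∀ i, U i i = 1) ∧ A = L * U
  | 0, A, _ => ⟨1, 1, fun i => i.elim0, fun i => i.elim0, fun i => i.elim0, fun i => i.elim0,
      by ext i; exact i.elim0⟩
  | (m + 1), A, h => by
    have ha : A 0 0 ≠ 0 := by
      have := h 1 (Nat.succ_le_succ (Nat.zero_le m))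
      rwa [lead_one] at this
    have hs : ∀ k (hk : k ≤ m), lead k hk (schur A) ≠ 0 := by
      intro k hk
      have h2 := h (k + 1) (Nat.succ_le_succ hk)
      rw [lead_succ_schur hk A ha] at h2
      intro h0
      exact h2 (by rw [h0, mul_zero])
    obtain ⟨L', U', hL'low, hU'up, hL'd, hU'd, hLU'⟩ := lu_exists m (schur A) hs
    refine ⟨ext1 (A 0 0) 0 (fun i => A i.succ 0) L',
            ext1 1 (fun j => (A 0 0)⁻¹ * A 0 j.succ) 0 U', ?_, ?_, ?_, ?_, ?_⟩
    · intro i j hij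
      rcases Fin.eq_zero_or_eq_succ j with rfl | ⟨j', rfl⟩
      · exact absurd hij (Fin.not_lt_zero i)
      · rcases Fin.eq_zero_or_eq_succ i with rfl | ⟨i', rfl⟩
        · simp
        · rw [ext1_succ_succ]
          exact hL'low i' j' (by rwa [Fin.succ_lt_succ_iff] at hij)
    · intro i j hij
      rcases Fin.eq_zero_or_eq_succ i with rfl | ⟨i', rfl⟩
      · exact absurd hij (Fin.not_lt_zero j)
      · rcases Fin.eq_zero_or_eq_succ j with rfl | ⟨j', rfl⟩
        · simp
        · rw [ext1_succ_succ]
          exact hU'up i' j' (by rwa [Fin.succ_lt_succ_iff] at hij)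
    · intro i
      rcases Fin.eq_zero_or_eq_succ i with rfl | ⟨i', rfl⟩
      · simpa using ha
      · simpa using hL'd i'
    · intro i
      rcases Fin.eq_zero_or_eq_succ i with rfl | ⟨i', rfl⟩
      · simp
      · simpa using hU'd i'
    · ext i j
      rw [Matrix.mul_apply, Fin.sum_univ_succ]
      rcases Fin.eq_zero_or_eq_succ i with rfl | ⟨i', rfl⟩
      · simp only [ext1_zero_zero, ext1_zero_succ, Pi.zero_apply, zero_mul,
          Finset.sum_const_zero, add_zero]
        rcases Fin.eq_zero_or_eq_succ j with rfl | ⟨j', rfl⟩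
        · simp
        · simp only [ext1_zero_succ]
          field_simp
      · rcases Fin.eq_zero_or_eq_succ j with rfl | ⟨j', rfl⟩
        · simp
        · simp only [ext1_succ_zero, ext1_zero_succ, ext1_succ_succ]
          have hLU : (L' * U') i' j' = schur A i' j' := by rw [← hLU']
          have : (∑ k' : Fin m, L' i' k' * U' k' j') = schur A i' j' := by
            rw [← Matrix.mul_apply, hLU]
          rw [this, schur]
          simp only [Matrix.of_apply]
          field_simp
          ring
variable {n : ℕ}

def eps (n : ℕ) : Fin (2 * n) → F := fun i => if (i : ℕ) < n then 1 else -1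

lemma eps_ne_zero (i : Fin (2 * n)) : eps (F := F) n i ≠ 0 := by
  unfold eps; split <;> simp

lemma eps_mul_self (i : Fin (2 * n)) : eps (F := F) n i * eps n i = 1 := by
  unfold eps; split <;> simp

lemma eps_rev (i : Fin (2 * n)) : eps (F := F) n (Fin.rev i) = -eps n i := by
  have hi := i.isLt
  have h1 : (Fin.rev i : ℕ) = 2 * n - (i + 1) := Fin.val_rev i
  have h2 : ((Fin.rev i : ℕ) < n) ↔ ¬((i : ℕ) < n) := by omega
  unfold eps
  by_cases h : (i : ℕ) < n
  · rw [if_pos h, if_neg (by rw [h2]; exact not_not_intro h)]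
  · rw [if_neg h, if_pos (h2.mpr h), neg_neg]

lemma J_apply (i j : Fin (2 * n)) :
    Jsp (F := F) n i j = if j = Fin.rev i then eps n i else 0 := by
  have hi := i.isLt
  have hj := j.isLt
  have : ((i : ℕ) + j = 2 * n - 1) ↔ j = Fin.rev i := by
    rw [Fin.ext_iff, Fin.val_rev]
    omega
  simp only [Jsp, Matrix.of_apply, eps]
  by_cases h : j = Fin.rev i
  · rw [if_pos (this.mpr h), if_pos h]
  · rw [if_neg (fun hc => h (this.mp hc)), if_neg h]

lemma J_mul (X : Matrix (Fin (2 * n)) (Fin (2 * n)) F) :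
    Jsp n * X = Matrix.of fun i j => eps n i * X (Fin.rev i) j := by
  ext i j
  rw [Matrix.mul_apply]
  simp only [J_apply, ite_mul, zero_mul, Matrix.of_apply]
  rw [Finset.sum_ite_eq' univ (Fin.rev i) (fun k => eps n i * X k j), if_pos (mem_univ _)]

lemma mul_J (X : Matrix (Fin (2 * n)) (Fin (2 * n)) F) :
    X * Jsp n = Matrix.of fun i j => eps n (Fin.rev j) * X i (Fin.rev j) := by
  ext i j
  rw [Matrix.mul_apply]
  have hc : ∀ k : Fin (2 * n), (j = Fin.rev k) = (k = Fin.rev j) := fun k =>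
    propext ⟨fun h => Fin.rev_eq_iff.mp h.symm, fun h => (Fin.rev_eq_iff.mpr h).symm⟩
  simp only [J_apply, hc, mul_ite, mul_zero]
  rw [Finset.sum_ite_eq' univ (Fin.rev j) (fun k => X i k * eps n k), if_pos (mem_univ _),
    mul_comm]
  rfl

lemma eps_mul_rev (i : Fin (2 * n)) : eps (F := F) n i * eps n (Fin.rev i) = -1 := by
  rw [eps_rev, mul_neg, eps_mul_self]

lemma J_mul_J : Jsp (F := F) n * Jsp n = -1 := by
  rw [J_mul]
  ext i j
  simp only [Matrix.of_apply, J_apply, Fin.rev_rev, Matrix.neg_apply, Matrix.one_apply]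
  by_cases h : j = i
  · subst h; rw [if_pos rfl, if_pos rfl, eps_mul_rev]
  · rw [if_neg h, if_neg (fun hc => h hc.symm), mul_zero, neg_zero]

lemma neg_J_mul_J : (-Jsp (F := F) n) * Jsp n = 1 := by
  rw [neg_mul, J_mul_J, neg_neg]

lemma J_mul_neg_J : Jsp (F := F) n * (-Jsp n) = 1 := by
  rw [mul_neg, J_mul_J, neg_neg]

lemma J_transpose : (Jsp (F := F) n)ᵀ = -Jsp n := by
  ext i j
  rw [Matrix.transpose_apply, Matrix.neg_apply, J_apply, J_apply]
  by_cases h : i = Fin.rev j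
  · rw [if_pos h, if_pos (Fin.rev_eq_iff.mp h.symm), h, eps_rev, neg_neg]
  · rw [if_neg h, if_neg (fun hc : j = Fin.rev i => h (Fin.rev_eq_iff.mp hc.symm)), neg_zero]

/-- conjugation `X ↦ -(J X J)`, an antidiagonal flip with signs -/
def cnj (n : ℕ) (X : Matrix (Fin (2 * n)) (Fin (2 * n)) F) :
    Matrix (Fin (2 * n)) (Fin (2 * n)) F := -(Jsp n * X * Jsp n)

lemma cnj_apply (X : Matrix (Fin (2 * n)) (Fin (2 * n)) F) (i j : Fin (2 * n)) :
    cnj n X i j = eps n i * eps n j * X (Fin.rev i) (Fin.rev j) := by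
  rw [cnj, mul_J, Matrix.neg_apply, Matrix.of_apply, J_mul, Matrix.of_apply, eps_rev]
  ring

lemma cnj_mul_J (X : Matrix (Fin (2 * n)) (Fin (2 * n)) F) :
    cnj n X * Jsp n = Jsp n * X := by
  rw [cnj, neg_mul, mul_assoc, mul_assoc, J_mul_J, mul_neg, mul_one, mul_neg, neg_neg]

lemma upT.cnj {X : Matrix (Fin (2 * n)) (Fin (2 * n)) F} (h : upT X) : lowT (cnj n X) := by
  intro i j hij
  rw [cnj_apply]
  rw [h (Fin.rev i) (Fin.rev j) (Fin.rev_lt_rev.mpr hij), mul_zero]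

lemma lowT.cnj {X : Matrix (Fin (2 * n)) (Fin (2 * n)) F} (h : lowT X) : upT (cnj n X) := by
  intro i j hij
  rw [cnj_apply]
  rw [h (Fin.rev i) (Fin.rev j) (Fin.rev_lt_rev.mpr hij), mul_zero]

lemma cnj_diag (X : Matrix (Fin (2 * n)) (Fin (2 * n)) F) (i : Fin (2 * n)) :
    cnj n X i i = X (Fin.rev i) (Fin.rev i) := by
  rw [cnj_apply, eps_mul_self, one_mul]


def esum (n : ℕ) : Fin n ⊕ Fin n ≃ Fin (2 * n) :=
  finSumFinEquiv.trans (finCongr (two_mul n).symm)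

lemma esum_inl_val (s : Fin n) : ((esum n) (Sum.inl s) : ℕ) = s := by
  simp [esum]

lemma esum_inr_val (s : Fin n) : ((esum n) (Sum.inr s) : ℕ) = n + s := by
  simp [esum]
  omega

/-- the `n × n` antidiagonal reversal matrix -/
def Rn (n : ℕ) : Matrix (Fin n) (Fin n) F :=
  Matrix.of fun i j => if j = Fin.rev i then 1 else 0

lemma Rn_mul (X : Matrix (Fin n) (Fin n) F) :
    Rn n * X = Matrix.of fun i j => X (Fin.rev i) j := by
  ext i j
  rw [Matrix.mul_apply]
  simp only [Rn, Matrix.of_apply, ite_mul, zero_mul, one_mul]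
  rw [Finset.sum_ite_eq' univ (Fin.rev i) (fun k => X k j), if_pos (mem_univ _)]

lemma mul_Rn (X : Matrix (Fin n) (Fin n) F) :
    X * Rn n = Matrix.of fun i j => X i (Fin.rev j) := by
  ext i j
  rw [Matrix.mul_apply]
  have hc : ∀ k : Fin n, (j = Fin.rev k) = (k = Fin.rev j) := fun k =>
    propext ⟨fun h => Fin.rev_eq_iff.mp h.symm, fun h => (Fin.rev_eq_iff.mpr h).symm⟩
  simp only [Rn, Matrix.of_apply, hc, mul_ite, mul_zero, mul_one]
  rw [Finset.sum_ite_eq' univ (Fin.rev j) (fun k => X i k), if_pos (mem_univ _)]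

lemma Rn_mul_Rn : Rn (F := F) n * Rn n = 1 := by
  rw [Rn_mul]
  ext i j
  simp only [Rn, Matrix.of_apply, Fin.rev_rev, Matrix.one_apply]
  by_cases h : j = i
  · rw [if_pos h, if_pos h.symm]
  · rw [if_neg h, if_neg (fun hc => h hc.symm)]

lemma Rn_conj (X : Matrix (Fin n) (Fin n) F) :
    Rn n * X * Rn n = Matrix.of fun i j => X (Fin.rev i) (Fin.rev j) := by
  ext i j
  rw [mul_Rn, Matrix.of_apply, Rn_mul, Matrix.of_apply, Matrix.of_apply]

lemma J_blocks : (Jsp (F := F) n).submatrix (esum n) (esum n) =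
    fromBlocks 0 (Rn n) (-(Rn n)) 0 := by
  ext i j
  rcases i with s | s <;> rcases j with t | t <;> rw [Matrix.submatrix_apply] <;>
      simp only [Jsp, Matrix.of_apply]
  · rw [Matrix.fromBlocks_apply₁₁, Matrix.zero_apply, if_neg]
    rw [esum_inl_val, esum_inl_val]
    have := s.isLt; have := t.isLt; omega
  · rw [Matrix.fromBlocks_apply₁₂]
    rw [esum_inl_val, esum_inr_val]
    have hc : ((s : ℕ) + (n + t) = 2 * n - 1) ↔ t = Fin.rev s := by
      rw [Fin.ext_iff, Fin.val_rev]
      have := s.isLt; have := t.isLt; omega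
    by_cases h : t = Fin.rev s
    · rw [if_pos (hc.mpr h), if_pos s.isLt, Rn, Matrix.of_apply, if_pos h]
    · rw [if_neg (fun hcc => h (hc.mp hcc)), Rn, Matrix.of_apply, if_neg h]
  · rw [Matrix.fromBlocks_apply₂₁, Matrix.neg_apply]
    rw [esum_inr_val, esum_inl_val]
    have hc : ((n + s : ℕ) + t = 2 * n - 1) ↔ t = Fin.rev s := by
      rw [Fin.ext_iff, Fin.val_rev]
      have := s.isLt; have := t.isLt; omega
    by_cases h : t = Fin.rev s
    · rw [if_pos (hc.mpr h), if_neg (by omega), Rn, Matrix.of_apply, if_pos h]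
    · rw [if_neg (fun hcc => h (hc.mp hcc)), Rn, Matrix.of_apply, if_neg h, neg_zero]
  · rw [Matrix.fromBlocks_apply₂₂, Matrix.zero_apply, if_neg]
    rw [esum_inr_val, esum_inr_val]
    have := s.isLt; have := t.isLt; omega

lemma submatrix_esum_mul (X Y : Matrix (Fin (2 * n)) (Fin (2 * n)) F) :
    (X * Y).submatrix (esum n) (esum n) =
      X.submatrix (esum n) (esum n) * Y.submatrix (esum n) (esum n) :=
  (Matrix.submatrix_mul_equiv X Y _ (esum n) _).symm

lemma lowT_fromBlocks_submatrix {W Y Z : Matrix (Fin n) (Fin n) F} (hW : lowT W) (hZ : lowT Z) :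
    lowT ((fromBlocks W 0 Y Z).submatrix ⇑(esum n).symm ⇑(esum n).symm) := by
  intro i j hij
  obtain ⟨si, rfl⟩ : ∃ s, esum n s = i := ⟨(esum n).symm i, (esum n).apply_symm_apply i⟩
  obtain ⟨sj, rfl⟩ : ∃ s, esum n s = j := ⟨(esum n).symm j, (esum n).apply_symm_apply j⟩
  rw [Matrix.submatrix_apply, Equiv.symm_apply_apply, Equiv.symm_apply_apply]
  rw [Fin.lt_def] at hij
  rcases si with s | s <;> rcases sj with t | t
  · rw [esum_inl_val, esum_inl_val] at hij
    exact Matrix.fromBlocks_apply₁₁ .. ▸ hW s t (Fin.lt_def.mpr hij)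
  · rw [Matrix.fromBlocks_apply₁₂, Matrix.zero_apply]
  · rw [esum_inr_val, esum_inl_val] at hij
    exact absurd hij (by have := t.isLt; omega)
  · rw [esum_inr_val, esum_inr_val] at hij
    exact Matrix.fromBlocks_apply₂₂ .. ▸ hZ s t (Fin.lt_def.mpr (by omega))

lemma upT_fromBlocks_submatrix {W X Z : Matrix (Fin n) (Fin n) F} (hW : upT W) (hZ : upT Z) :
    upT ((fromBlocks W X 0 Z).submatrix ⇑(esum n).symm ⇑(esum n).symm) := by
  intro i j hij
  obtain ⟨si, rfl⟩ : ∃ s, esum n s = i := ⟨(esum n).symm i, (esum n).apply_symm_apply i⟩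
  obtain ⟨sj, rfl⟩ : ∃ s, esum n s = j := ⟨(esum n).symm j, (esum n).apply_symm_apply j⟩
  rw [Matrix.submatrix_apply, Equiv.symm_apply_apply, Equiv.symm_apply_apply]
  rw [Fin.lt_def] at hij
  rcases si with s | s <;> rcases sj with t | t
  · rw [esum_inl_val, esum_inl_val] at hij
    exact Matrix.fromBlocks_apply₁₁ .. ▸ hW s t (Fin.lt_def.mpr hij)
  · rw [esum_inl_val, esum_inr_val] at hij
    exact absurd hij (by have := s.isLt; omega)
  · rw [Matrix.fromBlocks_apply₂₁, Matrix.zero_apply]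
  · rw [esum_inr_val, esum_inr_val] at hij
    exact Matrix.fromBlocks_apply₂₂ .. ▸ hZ s t (Fin.lt_def.mpr (by omega))

lemma diag_fromBlocks_submatrix (P : F → Prop) {W X Y Z : Matrix (Fin n) (Fin n) F}
    (hW : ∀ s, P (W s s)) (hZ : ∀ s, P (Z s s)) (i : Fin (2 * n)) :
    P (((fromBlocks W X Y Z).submatrix ⇑(esum n).symm ⇑(esum n).symm) i i) := by
  obtain ⟨si, rfl⟩ : ∃ s, esum n s = i := ⟨(esum n).symm i, (esum n).apply_symm_apply i⟩
  rw [Matrix.submatrix_apply, Equiv.symm_apply_apply]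
  rcases si with s | s
  · exact Matrix.fromBlocks_apply₁₁ .. ▸ hW s
  · exact Matrix.fromBlocks_apply₂₂ .. ▸ hZ s

lemma lead_toBlocks (M : Matrix (Fin (2 * n)) (Fin (2 * n)) F) (k : ℕ) (hk : k ≤ n)
    (hk2 : k ≤ 2 * n) :
    lead k hk ((M.submatrix (esum n) (esum n)).toBlocks₁₁) = lead k hk2 M := by
  unfold lead
  congr 1
lemma upT.det_ne_zero {m : ℕ} {A : Matrix (Fin m) (Fin m) F} (h : upT A)
    (hd : ∀ i, A i i ≠ 0) : A.det ≠ 0 := by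
  rw [h.det_eq]
  exact Finset.prod_ne_zero_iff.mpr fun i _ => hd i

lemma lowT.det_ne_zero {m : ℕ} {A : Matrix (Fin m) (Fin m) F} (h : lowT A)
    (hd : ∀ i, A i i ≠ 0) : A.det ≠ 0 := by
  rw [h.det_eq]
  exact Finset.prod_ne_zero_iff.mpr fun i _ => hd i

lemma upT.det_one {m : ℕ} {A : Matrix (Fin m) (Fin m) F} (h : upT A)
    (hd : ∀ i, A i i = 1) : A.det = 1 := by
  rw [h.det_eq]
  exact Finset.prod_eq_one fun i _ => hd i

lemma upT.diag_ne_zero {m : ℕ} {A : Matrix (Fin m) (Fin m) F} (h : upT A)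
    (hdet : A.det ≠ 0) (i : Fin m) : A i i ≠ 0 := by
  rw [h.det_eq] at hdet
  exact fun h0 => hdet (Finset.prod_eq_zero (mem_univ i) h0)

lemma bruhat_uniq {b₁ u₁ b₂ u₂ : Matrix (Fin (2 * n)) (Fin (2 * n)) F}
    (hb₁ : upT b₁) (hu₁ : upT u₁) (hu₁d : ∀ i, u₁ i i = 1)
    (hb₂ : upT b₂) (hb₂d : ∀ i, b₂ i i ≠ 0) (hu₂ : upT u₂) (hu₂d : ∀ i, u₂ i i = 1)
    (heq : b₁ * Jsp n * u₁ = b₂ * Jsp n * u₂) : b₁ = b₂ ∧ u₁ = u₂ := by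
  have hdu₁ : u₁.det ≠ 0 := by rw [hu₁.det_one hu₁d]; exact one_ne_zero
  have hdb₂ : b₂.det ≠ 0 := hb₂.det_ne_zero hb₂d
  set K := b₂⁻¹ * b₁ with hK
  set T := u₂ * u₁⁻¹ with hT
  have hKJ : K * Jsp n = Jsp n * T := by
    have h2 := congrArg (fun X => b₂⁻¹ * X * u₁⁻¹) heq
    simp only [← Matrix.mul_assoc] at h2
    rw [Matrix.mul_assoc (b₂⁻¹ * b₁ * Jsp n) u₁ u₁⁻¹,
      Matrix.mul_nonsing_inv u₁ hdu₁.isUnit, Matrix.mul_one,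
      Matrix.nonsing_inv_mul b₂ hdb₂.isUnit, Matrix.one_mul] at h2
    rw [hK, hT, ← Matrix.mul_assoc, Matrix.mul_assoc (Jsp n) u₂ u₁⁻¹] at *
    exact h2
  have hTc : T = cnj n K := by
    have h3 := congrArg (fun X => (-Jsp n) * X) hKJ
    simp only [← Matrix.mul_assoc] at h3
    rw [neg_J_mul_J, Matrix.one_mul] at h3
    have hc : cnj n K = -Jsp n * K * Jsp n := by rw [cnj]; simp only [neg_mul]
    rw [hc, h3]
  have hTup : upT T := hu₂.mul (hu₁.inv hdu₁)
  have hTd : ∀ i, T i i = 1 := by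
    intro i
    rw [hT, hu₂.diag_mul (hu₁.inv hdu₁) i, hu₂d i, hu₁.diag_inv hdu₁ i, hu₁d i,
      inv_one, mul_one]
  have hTlow : lowT T := by
    rw [hTc]
    exact ((hb₂.inv hdb₂).mul hb₁).cnj
  have hT1 : T = 1 := eq_one_of_lowT_upT hTlow hTup hTd
  have hu : u₁ = u₂ := by
    have h4 := congrArg (fun X => X * u₁) hT1
    rw [hT, Matrix.mul_assoc, Matrix.nonsing_inv_mul u₁ hdu₁.isUnit, Matrix.mul_one,
      Matrix.one_mul] at h4
    exact h4.symm
  have hKJ' : K * Jsp n = Jsp n := by rw [hKJ, hT1, Matrix.mul_one]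
  have hK1 : K = 1 := by
    have h5 := congrArg (fun X => X * (-Jsp n)) hKJ'
    rw [Matrix.mul_assoc, J_mul_neg_J, Matrix.mul_one] at h5
    exact h5
  have hb : b₁ = b₂ := by
    have h6 := Matrix.mul_nonsing_inv_cancel_left b₂ b₁ hdb₂.isUnit
    rw [← hK, hK1, Matrix.mul_one] at h6
    exact h6.symm
  exact ⟨hb, hu⟩


lemma leadBlock_mul_lowT {m k : ℕ} (hk : k ≤ m) (X Y : Matrix (Fin m) (Fin m) F)
    (hX : lowT X) :
    (Matrix.of fun s t : Fin k => (X * Y) (Fin.castLE hk s) (Fin.castLE hk t)) =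
      (Matrix.of fun s t : Fin k => X (Fin.castLE hk s) (Fin.castLE hk t)) *
      (Matrix.of fun s t : Fin k => Y (Fin.castLE hk s) (Fin.castLE hk t)) := by
  ext s t
  rw [Matrix.mul_apply, Matrix.of_apply, Matrix.mul_apply]
  have key : ∑ j : Fin m, X (Fin.castLE hk s) j * Y j (Fin.castLE hk t)
      = ∑ j ∈ (univ : Finset (Fin k)).map (Fin.castLEEmb hk),
          X (Fin.castLE hk s) j * Y j (Fin.castLE hk t) := by
    refine (Finset.sum_subset (subset_univ _) ?_).symm
    intro j _ hj
    have hjk : ¬ (j : ℕ) < k := by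
      intro hlt
      exact hj (Finset.mem_map.mpr ⟨⟨(j : ℕ), hlt⟩, mem_univ _, Fin.ext rfl⟩)
    have hlt : Fin.castLE hk s < j := by
      rw [Fin.lt_def]
      simp only [Fin.coe_castLE]
      have := s.isLt; omega
    rw [hX _ _ hlt, zero_mul]
  rw [key, Finset.sum_map]
  rfl

lemma lead_vs_alpha (k : ℕ) (hk : k ≤ 2 * n) (g : Matrix (Fin (2 * n)) (Fin (2 * n)) F) :
    lead k hk (-(Jsp n * g)) ≠ 0 ↔ alphaMinor n k hk g ≠ 0 := by
  set N : Matrix (Fin k) (Fin k) F := Matrix.of fun s t : Fin k =>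
    g ⟨2 * n - k + s.val, by have := s.isLt; omega⟩ ⟨t.val, by have := t.isLt; omega⟩ with hN
  set M : Matrix (Fin (2 * n)) (Fin (2 * n)) F := -(Jsp n * g) with hM
  have hblock : (Matrix.of fun s t : Fin k => M (Fin.castLE hk s) (Fin.castLE hk t))
      = Matrix.diagonal (fun s : Fin k => -eps n (Fin.castLE hk s)) *
        (N.submatrix ⇑(Fin.revPerm) id) := by
    ext s t
    rw [Matrix.of_apply, hM, Matrix.neg_apply, J_mul, Matrix.of_apply,
      Matrix.diagonal_mul, Matrix.submatrix_apply, Fin.revPerm_apply, id_eq, hN,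
      Matrix.of_apply, neg_mul, neg_inj]
    have hrow : Fin.rev (Fin.castLE hk s) =
        (⟨2 * n - k + (Fin.rev s).val, by have := (Fin.rev s).isLt; omega⟩ : Fin (2 * n)) := by
      apply Fin.ext
      have hs := s.isLt
      simp only [Fin.val_rev, Fin.coe_castLE]
      omega
    have hcol : Fin.castLE hk t = (⟨t.val, by have := t.isLt; omega⟩ : Fin (2 * n)) := rfl
    rw [hrow, hcol]
  have hd : (∏ s : Fin k, -eps (F := F) n (Fin.castLE hk s)) ≠ 0 := by
    rw [Finset.prod_ne_zero_iff]
    exact fun s _ => neg_ne_zero.mpr (eps_ne_zero _)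
  have hsgn : ((Equiv.Perm.sign (Fin.revPerm : Equiv.Perm (Fin k)) : ℤ) : F) ≠ 0 := by
    rcases Int.units_eq_one_or (Equiv.Perm.sign (Fin.revPerm : Equiv.Perm (Fin k))) with h | h
    · rw [h]; simp
    · rw [h]; simp
  have : lead k hk (-(Jsp n * g)) =
      (∏ s : Fin k, -eps (F := F) n (Fin.castLE hk s)) *
      (((Equiv.Perm.sign (Fin.revPerm : Equiv.Perm (Fin k)) : ℤ) : F) * alphaMinor n k hk g) := by
    rw [lead, hblock, Matrix.det_mul, Matrix.det_diagonal, Matrix.det_permute]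
    rfl
  rw [this, mul_ne_zero_iff, mul_ne_zero_iff]
  constructor
  · exact fun h => h.2.2
  · exact fun h => ⟨hd, hsgn, h⟩
lemma det_J_ne_zero : (Jsp (F := F) n).det ≠ 0 := by
  have h := congrArg Matrix.det (J_mul_neg_J (F := F) (n := n))
  rw [Matrix.det_mul, Matrix.det_one] at h
  exact left_ne_zero_of_mul_eq_one h

lemma det_ne_zero_of_symp {g : Matrix (Fin (2 * n)) (Fin (2 * n)) F}
    (hg : gᵀ * Jsp n * g = Jsp n) : g.det ≠ 0 := by
  intro h0
  have h1 := congrArg Matrix.det hg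
  rw [Matrix.det_mul, Matrix.det_mul, Matrix.det_transpose, h0, mul_zero] at h1
  exact det_J_ne_zero h1.symm

lemma backward {g b u : Matrix (Fin (2 * n)) (Fin (2 * n)) F}
    (hbs : bᵀ * Jsp n * b = Jsp n) (hb : upT b)
    (hu : upT u) (hud : ∀ i, u i i = 1)
    (hgdef : g = b * Jsp n * u) (k : ℕ) (hk2 : k ≤ 2 * n) :
    alphaMinor n k hk2 g ≠ 0 := by
  have hdb : b.det ≠ 0 := det_ne_zero_of_symp hbs
  have hbdiag : ∀ i, b i i ≠ 0 := hb.diag_ne_zero hdb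
  have hM : -(Jsp n * g) = cnj n b * u := by
    rw [hgdef, cnj, neg_mul]
    simp only [← Matrix.mul_assoc]
  rw [← lead_vs_alpha k hk2 g]
  unfold lead
  rw [hM, leadBlock_mul_lowT hk2 (cnj n b) u hb.cnj, Matrix.det_mul]
  have hcast_lt : ∀ s t : Fin k, s < t → Fin.castLE hk2 s < Fin.castLE hk2 t := by
    intro s t hst
    rw [Fin.lt_def] at *
    exact hst
  apply mul_ne_zero
  · apply lowT.det_ne_zero
    · intro s t hst
      rw [Matrix.of_apply]
      exact hb.cnj _ _ (hcast_lt s t hst)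
    · intro s
      rw [Matrix.of_apply, cnj_diag]
      exact hbdiag _
  · apply ne_of_eq_of_ne (upT.det_one ?_ ?_) one_ne_zero
    · intro s t hst
      rw [Matrix.of_apply]
      exact hu _ _ (hcast_lt t s hst)
    · intro s
      rw [Matrix.of_apply]
      exact hud _
lemma forward (hn : 0 < n) {g : Matrix (Fin (2 * n)) (Fin (2 * n)) F}
    (hg : gᵀ * Jsp n * g = Jsp n)
    (h : ∀ (k : ℕ), 1 ≤ k → k ≤ n → ∀ (hk : k ≤ 2 * n), alphaMinor n k hk g ≠ 0) :
    ∃ b u : Matrix (Fin (2 * n)) (Fin (2 * n)) F,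
      bᵀ * Jsp n * b = Jsp n ∧ upT b ∧
      uᵀ * Jsp n * u = Jsp n ∧ upT u ∧ (∀ i, u i i = 1) ∧
      g = b * Jsp n * u := by
  set M : Matrix (Fin (2 * n)) (Fin (2 * n)) F := -(Jsp n * g) with hMdef
  have hJM : Jsp n * M = g := by
    rw [hMdef, Matrix.mul_neg, ← Matrix.mul_assoc, J_mul_J, neg_one_mul, neg_neg]
  have hMT : Mᵀ = gᵀ * Jsp n := by
    rw [hMdef, Matrix.transpose_neg, Matrix.transpose_mul, J_transpose, Matrix.mul_neg, neg_neg]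
  have hMsymp : Mᵀ * Jsp n * M = Jsp n := by
    rw [hMT, hMdef]
    calc gᵀ * Jsp n * Jsp n * -(Jsp n * g)
        = -(gᵀ * Jsp n * Jsp n * Jsp n * g) := by
          rw [Matrix.mul_neg]; simp only [← Matrix.mul_assoc]
      _ = gᵀ * Jsp n * g := by
          rw [Matrix.mul_assoc gᵀ (Jsp n) (Jsp n), J_mul_J, mul_neg_one,
            Matrix.neg_mul, Matrix.neg_mul, neg_neg]
      _ = Jsp n := hg
  have hMlead : ∀ k (hk : k ≤ 2 * n), k ≤ n → lead k hk M ≠ 0 := by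
    intro k hk hkn
    rcases Nat.eq_zero_or_pos k with rfl | hk1
    · rw [lead_zero]; exact one_ne_zero
    · exact (lead_vs_alpha k hk g).mpr (h k hk1 hkn hk)
  set A := (M.submatrix (esum n) (esum n)).toBlocks₁₁ with hA
  set B := (M.submatrix (esum n) (esum n)).toBlocks₁₂ with hB
  set C := (M.submatrix (esum n) (esum n)).toBlocks₂₁ with hC
  set D := (M.submatrix (esum n) (esum n)).toBlocks₂₂ with hD
  have hM' : M.submatrix (esum n) (esum n) = fromBlocks A B C D :=
    (Matrix.fromBlocks_toBlocks _).symm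
  have hAlead : ∀ k (hk : k ≤ n), lead k hk A ≠ 0 := by
    intro k hk
    rw [hA, lead_toBlocks M k hk (le_trans hk (by omega))]
    exact hMlead k _ hk
  have hdA : A.det ≠ 0 := by
    have := hAlead n le_rfl
    rwa [lead_self] at this
  obtain ⟨LA, UA, hLAl, hUAu, hLAd, hUAd, hALU⟩ := lu_exists n A hAlead
  -- block symplectic relations
  have hs := congrArg (fun X => X.submatrix (esum n) (esum n)) hMsymp
  rw [submatrix_esum_mul, submatrix_esum_mul] at hs
  rw [← Matrix.transpose_submatrix, J_blocks, hM', Matrix.fromBlocks_transpose,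
    Matrix.fromBlocks_multiply, Matrix.fromBlocks_multiply] at hs
  have h11 := congrArg Matrix.toBlocks₁₁ hs
  have h12 := congrArg Matrix.toBlocks₁₂ hs
  simp only [Matrix.toBlocks_fromBlocks₁₁, Matrix.toBlocks_fromBlocks₁₂] at h11 h12
  simp only [Matrix.mul_zero, Matrix.zero_mul, Matrix.mul_neg, Matrix.neg_mul,
    zero_add, add_zero] at h11 h12
  rw [add_comm] at h11 h12
  rw [← sub_eq_add_neg] at h11 h12
  have hAC : Aᵀ * Rn n * C = Cᵀ * Rn n * A := sub_eq_zero.mp h11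
  have hD12 : Aᵀ * Rn n * D = Rn n + Cᵀ * Rn n * B := sub_eq_iff_eq_add.mp h12
  set S := D - C * A⁻¹ * B with hSdef
  have hATRS : Aᵀ * (Rn n * S) = Rn n := by
    rw [hSdef, Matrix.mul_sub, Matrix.mul_sub]
    have e1 : Aᵀ * (Rn n * D) = Aᵀ * Rn n * D := by rw [Matrix.mul_assoc]
    have e2 : Aᵀ * (Rn n * (C * A⁻¹ * B)) = Cᵀ * Rn n * B := by
      calc Aᵀ * (Rn n * (C * A⁻¹ * B)) = Aᵀ * Rn n * C * A⁻¹ * B := by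
            simp only [← Matrix.mul_assoc]
        _ = Cᵀ * Rn n * A * A⁻¹ * B := by rw [hAC]
        _ = Cᵀ * Rn n * B := by
            rw [Matrix.mul_nonsing_inv_cancel_right A (Cᵀ * Rn n) hdA.isUnit]
    rw [e1, e2, hD12]
    abel
  have hdAT : (Aᵀ).det ≠ 0 := by rwa [Matrix.det_transpose]
  have hRS : Rn n * S = (Aᵀ)⁻¹ * Rn n := by
    have h2 := congrArg (fun X => (Aᵀ)⁻¹ * X) hATRS
    rw [← Matrix.mul_assoc, Matrix.nonsing_inv_mul _ hdAT.isUnit, Matrix.one_mul] at h2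
    exact h2
  have hS : S = Rn n * ((Aᵀ)⁻¹ * Rn n) := by
    have h3 := congrArg (fun X => Rn n * X) hRS
    rw [← Matrix.mul_assoc, Rn_mul_Rn, Matrix.one_mul] at h3
    exact h3
  have hATinv : (Aᵀ)⁻¹ = (LAᵀ)⁻¹ * (UAᵀ)⁻¹ := by
    rw [hALU, Matrix.transpose_mul, Matrix.mul_inv_rev]
  set LS := Matrix.of fun i j => (LAᵀ)⁻¹ (Fin.rev i) (Fin.rev j) with hLSdef
  set US := Matrix.of fun i j => (UAᵀ)⁻¹ (Fin.rev i) (Fin.rev j) with hUSdef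
  have hLSc : Rn n * (LAᵀ)⁻¹ * Rn n = LS := Rn_conj _
  have hUSc : Rn n * (UAᵀ)⁻¹ * Rn n = US := Rn_conj _
  have hSLU : S = LS * US := by
    rw [hS, hATinv, ← hLSc, ← hUSc]
    simp only [← Matrix.mul_assoc]
    rw [Matrix.mul_assoc (Rn n * (LAᵀ)⁻¹) (Rn n) (Rn n), Rn_mul_Rn, Matrix.mul_one]
  have hdetLA : LA.det ≠ 0 := hLAl.det_ne_zero hLAd
  have hdetLAT : (LAᵀ).det ≠ 0 := by rwa [Matrix.det_transpose]
  have hLATu : upT LAᵀ := hLAl.transpose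
  have hLATinvu : upT (LAᵀ)⁻¹ := hLATu.inv hdetLAT
  have hLSl : lowT LS := by
    intro i j hij
    rw [hLSdef, Matrix.of_apply]
    exact hLATinvu _ _ (Fin.rev_lt_rev.mpr hij)
  have hLSd : ∀ i, LS i i ≠ 0 := by
    intro i
    rw [hLSdef, Matrix.of_apply, hLATu.diag_inv hdetLAT, Matrix.transpose_apply]
    exact inv_ne_zero (hLAd _)
  have hdetUAT : (UAᵀ).det ≠ 0 := by
    rw [Matrix.det_transpose, hUAu.det_one hUAd]; exact one_ne_zero
  have hUATl : lowT UAᵀ := hUAu.transpose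
  have hUATinvl : lowT (UAᵀ)⁻¹ := hUATl.inv hdetUAT
  have hUSu : upT US := by
    intro i j hij
    rw [hUSdef, Matrix.of_apply]
    exact hUATinvl _ _ (Fin.rev_lt_rev.mpr hij)
  have hUSd : ∀ i, US i i = 1 := by
    intro i
    rw [hUSdef, Matrix.of_apply, hUATl.diag_inv hdetUAT, Matrix.transpose_apply, hUAd, inv_one]
  -- assemble the triangular factors of M
  have e11 : LA * UA + (0 : Matrix (Fin n) (Fin n) F) * (0 : Matrix (Fin n) (Fin n) F) = A := by
    rw [Matrix.zero_mul, add_zero, ← hALU]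
  have e12 : LA * (LA⁻¹ * B) + (0 : Matrix (Fin n) (Fin n) F) * US = B := by
    rw [Matrix.zero_mul, add_zero, Matrix.mul_nonsing_inv_cancel_left LA B hdetLA.isUnit]
  have e21 : C * A⁻¹ * LA * UA + LS * (0 : Matrix (Fin n) (Fin n) F) = C := by
    rw [Matrix.mul_zero, add_zero, Matrix.mul_assoc (C * A⁻¹) LA UA, ← hALU,
      Matrix.nonsing_inv_mul_cancel_right A C hdA.isUnit]
  have e22 : C * A⁻¹ * LA * (LA⁻¹ * B) + LS * US = D := by
    rw [Matrix.mul_assoc (C * A⁻¹) LA (LA⁻¹ * B),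
      Matrix.mul_nonsing_inv_cancel_left LA B hdetLA.isUnit, ← hSLU, hSdef]
    abel
  have hLbUb : fromBlocks LA 0 (C * A⁻¹ * LA) LS * fromBlocks UA (LA⁻¹ * B) 0 US
      = M.submatrix (esum n) (esum n) := by
    rw [Matrix.fromBlocks_multiply, hM', e11, e12, e21, e22]
  set L := (fromBlocks LA 0 (C * A⁻¹ * LA) LS).submatrix ⇑(esum n).symm ⇑(esum n).symm
    with hLdef
  set U := (fromBlocks UA (LA⁻¹ * B) 0 US).submatrix ⇑(esum n).symm ⇑(esum n).symm
    with hUdef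
  have hLUM : L * U = M := by
    rw [hLdef, hUdef, Matrix.submatrix_mul_equiv _ _ _ ((esum n).symm) _, hLbUb,
      Matrix.submatrix_submatrix, Equiv.self_comp_symm, Matrix.submatrix_id_id]
  have hLl : lowT L := lowT_fromBlocks_submatrix hLAl hLSl
  have hUu : upT U := upT_fromBlocks_submatrix hUAu hUSu
  have hLd : ∀ i, L i i ≠ 0 := fun i => diag_fromBlocks_submatrix (fun x => x ≠ 0) hLAd hLSd i
  have hUd : ∀ i, U i i = 1 := fun i => diag_fromBlocks_submatrix (fun x => x = 1) hUAd hUSd i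
  set b := cnj n L with hbdef
  have hbJu : b * Jsp n * U = g := by rw [hbdef, cnj_mul_J, Matrix.mul_assoc, hLUM, hJM]
  have hbup : upT b := hLl.cnj
  have hbd : ∀ i, b i i ≠ 0 := fun i => by rw [hbdef, cnj_diag]; exact hLd _
  have hdb : b.det ≠ 0 := hbup.det_ne_zero hbd
  have hdu : U.det ≠ 0 := by rw [hUu.det_one hUd]; exact one_ne_zero
  have hdbT : (bᵀ).det ≠ 0 := by rwa [Matrix.det_transpose]
  have hduT : (Uᵀ).det ≠ 0 := by rwa [Matrix.det_transpose]
  have hb'u : upT (cnj n (bᵀ)⁻¹) := (hbup.transpose.inv hdbT).cnj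
  have hb'd : ∀ i, cnj n (bᵀ)⁻¹ i i ≠ 0 := by
    intro i
    rw [cnj_diag, hbup.transpose.diag_inv hdbT, Matrix.transpose_apply]
    exact inv_ne_zero (hbd _)
  have hu'u : upT (cnj n (Uᵀ)⁻¹) := (hUu.transpose.inv hduT).cnj
  have hu'd : ∀ i, cnj n (Uᵀ)⁻¹ i i = 1 := by
    intro i
    rw [cnj_diag, hUu.transpose.diag_inv hduT, Matrix.transpose_apply, hUd, inv_one]
  have hnegJinv : (-Jsp (F := F) n)⁻¹ = Jsp n := Matrix.inv_eq_right_inv neg_J_mul_J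
  have hgT : gᵀ = Uᵀ * (-Jsp n * bᵀ) := by
    rw [← hbJu, Matrix.transpose_mul, Matrix.transpose_mul, J_transpose]
  have hgTinv1 : (gᵀ)⁻¹ = (bᵀ)⁻¹ * Jsp n * (Uᵀ)⁻¹ := by
    rw [hgT, Matrix.mul_inv_rev, Matrix.mul_inv_rev, hnegJinv]
  have hgTinv2 : (gᵀ)⁻¹ = -(Jsp n * g * Jsp n) := by
    have h4 : gᵀ * (Jsp n * g * -Jsp n) = 1 := by
      calc gᵀ * (Jsp n * g * -Jsp n) = gᵀ * Jsp n * g * -Jsp n := by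
            simp only [← Matrix.mul_assoc]
        _ = Jsp n * -Jsp n := by rw [hg]
        _ = 1 := J_mul_neg_J
    have h5 := Matrix.inv_eq_right_inv h4
    rw [h5, Matrix.mul_neg]
  have hkey : ∀ X Y : Matrix (Fin (2 * n)) (Fin (2 * n)) F,
      cnj n X * Jsp n * cnj n Y = -(Jsp n * (X * Jsp n * Y) * Jsp n) := by
    intro X Y
    rw [cnj_mul_J, cnj, Matrix.mul_neg]
    simp only [← Matrix.mul_assoc]
  have hb'Ju' : cnj n (bᵀ)⁻¹ * Jsp n * cnj n (Uᵀ)⁻¹ = g := by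
    rw [hkey, ← hgTinv1, hgTinv2]
    rw [Matrix.mul_neg, Matrix.neg_mul, neg_neg]
    calc Jsp n * (Jsp n * g * Jsp n) * Jsp n = Jsp n * Jsp n * g * Jsp n * Jsp n := by
          simp only [← Matrix.mul_assoc]
      _ = g := by
          rw [J_mul_J, Matrix.mul_assoc (-1 * g) (Jsp n) (Jsp n), J_mul_J, neg_one_mul,
            mul_neg_one, neg_neg]
  obtain ⟨hbb', hUu'⟩ := bruhat_uniq hbup hUu hUd hb'u hb'd hu'u hu'd
    (by rw [hbJu, hb'Ju'])
  have hsymp_of : ∀ x : Matrix (Fin (2 * n)) (Fin (2 * n)) F, x.det ≠ 0 →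
      x = cnj n (xᵀ)⁻¹ → xᵀ * Jsp n * x = Jsp n := by
    intro x hdx hx
    have hdxT : (xᵀ).det ≠ 0 := by rwa [Matrix.det_transpose]
    have h7 : x * Jsp n = Jsp n * (xᵀ)⁻¹ := by
      conv_lhs => rw [hx, cnj_mul_J]
    have h9 := congrArg (fun X => -Jsp n * X) h7
    simp only [← Matrix.mul_assoc] at h9
    rw [neg_J_mul_J, Matrix.one_mul] at h9
    have h10 : xᵀ * (xᵀ)⁻¹ = 1 := Matrix.mul_nonsing_inv _ hdxT.isUnit
    rw [← h9] at h10
    simp only [Matrix.mul_neg, Matrix.neg_mul, ← Matrix.mul_assoc] at h10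
    have h11 : xᵀ * Jsp n * x * Jsp n = -1 := by
      rw [← neg_neg (xᵀ * Jsp n * x * Jsp n), h10]
    calc xᵀ * Jsp n * x = xᵀ * Jsp n * x * (Jsp n * -Jsp n) := by
          rw [J_mul_neg_J, Matrix.mul_one]
      _ = xᵀ * Jsp n * x * Jsp n * -Jsp n := by simp only [← Matrix.mul_assoc]
      _ = Jsp n := by rw [h11, neg_one_mul, neg_neg]
  exact ⟨b, U, hsymp_of b hdb (hbb'.trans rfl), hbup,
    hsymp_of U hdu (hUu'.trans rfl), hUu, hUd, hbJu.symm⟩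
end Stmt11

/-- In `G = Sp_{2n}(F)` (matrices `g` with `gᵀ J g = J` for the
antidiagonal form `J = Jsp n`, whose matrix also realizes the longest Weyl element `w₀`),
the set `{g ∈ G : α_k(g) ≠ 0 for all 1 ≤ k ≤ n}` equals the big Bruhat cell `B w₀ N`,
where `B` is the Borel subgroup of upper-triangular elements of `G` and `N` its
unipotent radical. -/
theorem stmt11 {F : Type*} [Field F] (n : ℕ) (hn : 0 < n)
    (g : Matrix (Fin (2 * n)) (Fin (2 * n)) F)
    (hg : g.transpose * Jsp n * g = Jsp n) :
    (∀ (k : ℕ) (hk1 : 1 ≤ k) (hk2 : k ≤ n), alphaMinor n k (by omega) g ≠ 0) ↔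
    ∃ b u : Matrix (Fin (2 * n)) (Fin (2 * n)) F,
      b.transpose * Jsp n * b = Jsp n ∧ (∀ i j : Fin (2 * n), j < i → b i j = 0) ∧
      u.transpose * Jsp n * u = Jsp n ∧ (∀ i j : Fin (2 * n), j < i → u i j = 0) ∧
      (∀ i, u i i = 1) ∧
      g = b * Jsp n * u := by
  constructor
  · intro h
    obtain ⟨b, u, hbs, hbu, hus, huu, hud, hgdef⟩ := Stmt11.forward hn hg
      (fun k hk1 hkn hk => h k hk1 hkn)
    exact ⟨b, u, hbs, hbu, hus, huu, hud, hgdef⟩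
  · rintro ⟨b, u, hbs, hbu, hus, huu, hud, hgdef⟩ k hk1 hk2
    exact Stmt11.backward hbs hbu huu hud hgdef k (by omega)
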